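/- For every u ∈ (0, π/2) one has D₀(u) > 0, where D₀(u) = (1/8)·cos u·sin u·((−48u² − 3)·cos(2u) + 3·cos(6u) + (42u − 64u³)·sin(2u) + 2u·sin(6u)). -/

import Mathlib

open Set Real

set_option maxHeartbeats 2000000

private lemma nonneg_of_deriv (f f' : ℝ → ℝ) (hd : ∀ x, HasDerivAt f (f' x) x)
    (h0 : f 0 = 0) (hf' : ∀ x, 0 ≤ x → 0 ≤ f' x) : ∀ x, 0 ≤ x → 0 ≤ f x := by
  intro x hx
  have hm : MonotoneOn f (Set.Ici (0:ℝ)) := by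
    apply monotoneOn_of_deriv_nonneg (convex_Ici 0)
      (fun y _ => (hd y).continuousAt.continuousWithinAt)
      (fun y _ => (hd y).differentiableAt.differentiableWithinAt)
    intro y hy
    rw [(hd y).deriv]
    exact hf' y (le_of_lt (by simpa using hy))
  have h2 := hm (Set.self_mem_Ici) (Set.mem_Ici.2 hx) hx
  simpa [h0] using h2

lemma LB3 : ∀ x : ℝ, 0 ≤ x → 0 ≤ Real.sin x - (x - x^3/6) := by
  apply nonneg_of_deriv _ (fun y => Real.cos y - (1 - y^2/2))
  · intro y
    have h := ((Real.hasDerivAt_sin y).sub ((hasDerivAt_id y).sub ((hasDerivAt_pow 3 y).div_const 6)))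
    refine h.congr_deriv ?_
    push_cast; ring
  · norm_num
  · intro y hy
    rcases eq_or_lt_of_le hy with h|h
    · simp [← h]
    · have := Real.one_sub_sq_div_two_lt_cos (x := y) (by positivity)
      linarith

lemma LB4 : ∀ x : ℝ, 0 ≤ x → 0 ≤ (1 - x^2/2 + x^4/24) - Real.cos x := by
  apply nonneg_of_deriv _ (fun y => Real.sin y - (y - y^3/6))
  · intro y
    have h := ((((hasDerivAt_const y (1:ℝ)).sub ((hasDerivAt_pow 2 y).div_const 2)).add ((hasDerivAt_pow 4 y).div_const 24)).sub (Real.hasDerivAt_cos y))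
    refine h.congr_deriv ?_
    push_cast; ring
  · norm_num
  · exact LB3

lemma LB5 : ∀ x : ℝ, 0 ≤ x → 0 ≤ (x - x^3/6 + x^5/120) - Real.sin x := by
  apply nonneg_of_deriv _ (fun y => (1 - y^2/2 + y^4/24) - Real.cos y)
  · intro y
    have h := ((((hasDerivAt_id y).sub ((hasDerivAt_pow 3 y).div_const 6)).add ((hasDerivAt_pow 5 y).div_const 120)).sub (Real.hasDerivAt_sin y))
    refine h.congr_deriv ?_
    push_cast; ring
  · norm_num
  · exact LB4

lemma LB6 : ∀ x : ℝ, 0 ≤ x → 0 ≤ Real.cos x - (1 - x^2/2 + x^4/24 - x^6/720) := by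
  apply nonneg_of_deriv _ (fun y => (y - y^3/6 + y^5/120) - Real.sin y)
  · intro y
    have h := ((Real.hasDerivAt_cos y).sub ((((hasDerivAt_const y (1:ℝ)).sub ((hasDerivAt_pow 2 y).div_const 2)).add ((hasDerivAt_pow 4 y).div_const 24)).sub ((hasDerivAt_pow 6 y).div_const 720)))
    refine h.congr_deriv ?_
    push_cast; ring
  · norm_num
  · exact LB5

lemma LB7 : ∀ x : ℝ, 0 ≤ x → 0 ≤ Real.sin x - (x - x^3/6 + x^5/120 - x^7/5040) := by
  apply nonneg_of_deriv _ (fun y => Real.cos y - (1 - y^2/2 + y^4/24 - y^6/720))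
  · intro y
    have h := ((Real.hasDerivAt_sin y).sub ((((hasDerivAt_id y).sub ((hasDerivAt_pow 3 y).div_const 6)).add ((hasDerivAt_pow 5 y).div_const 120)).sub ((hasDerivAt_pow 7 y).div_const 5040)))
    refine h.congr_deriv ?_
    push_cast; ring
  · norm_num
  · exact LB6

lemma LB8 : ∀ x : ℝ, 0 ≤ x → 0 ≤ (1 - x^2/2 + x^4/24 - x^6/720 + x^8/40320) - Real.cos x := by
  apply nonneg_of_deriv _ (fun y => Real.sin y - (y - y^3/6 + y^5/120 - y^7/5040))
  · intro y
    have h := ((((((hasDerivAt_const y (1:ℝ)).sub ((hasDerivAt_pow 2 y).div_const 2)).add ((hasDerivAt_pow 4 y).div_const 24)).sub ((hasDerivAt_pow 6 y).div_const 720)).add ((hasDerivAt_pow 8 y).div_const 40320)).sub (Real.hasDerivAt_cos y))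
    refine h.congr_deriv ?_
    push_cast; ring
  · norm_num
  · exact LB7

lemma LB9 : ∀ x : ℝ, 0 ≤ x → 0 ≤ (x - x^3/6 + x^5/120 - x^7/5040 + x^9/362880) - Real.sin x := by
  apply nonneg_of_deriv _ (fun y => (1 - y^2/2 + y^4/24 - y^6/720 + y^8/40320) - Real.cos y)
  · intro y
    have h := ((((((hasDerivAt_id y).sub ((hasDerivAt_pow 3 y).div_const 6)).add ((hasDerivAt_pow 5 y).div_const 120)).sub ((hasDerivAt_pow 7 y).div_const 5040)).add ((hasDerivAt_pow 9 y).div_const 362880)).sub (Real.hasDerivAt_sin y))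
    refine h.congr_deriv ?_
    push_cast; ring
  · norm_num
  · exact LB8

lemma LB10 : ∀ x : ℝ, 0 ≤ x → 0 ≤ Real.cos x - (1 - x^2/2 + x^4/24 - x^6/720 + x^8/40320 - x^10/3628800) := by
  apply nonneg_of_deriv _ (fun y => (y - y^3/6 + y^5/120 - y^7/5040 + y^9/362880) - Real.sin y)
  · intro y
    have h := ((Real.hasDerivAt_cos y).sub ((((((hasDerivAt_const y (1:ℝ)).sub ((hasDerivAt_pow 2 y).div_const 2)).add ((hasDerivAt_pow 4 y).div_const 24)).sub ((hasDerivAt_pow 6 y).div_const 720)).add ((hasDerivAt_pow 8 y).div_const 40320)).sub ((hasDerivAt_pow 10 y).div_const 3628800)))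
    refine h.congr_deriv ?_
    push_cast; ring
  · norm_num
  · exact LB9

lemma LB11 : ∀ x : ℝ, 0 ≤ x → 0 ≤ Real.sin x - (x - x^3/6 + x^5/120 - x^7/5040 + x^9/362880 - x^11/39916800) := by
  apply nonneg_of_deriv _ (fun y => Real.cos y - (1 - y^2/2 + y^4/24 - y^6/720 + y^8/40320 - y^10/3628800))
  · intro y
    have h := ((Real.hasDerivAt_sin y).sub ((((((hasDerivAt_id y).sub ((hasDerivAt_pow 3 y).div_const 6)).add ((hasDerivAt_pow 5 y).div_const 120)).sub ((hasDerivAt_pow 7 y).div_const 5040)).add ((hasDerivAt_pow 9 y).div_const 362880)).sub ((hasDerivAt_pow 11 y).div_const 39916800)))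
    refine h.congr_deriv ?_
    push_cast; ring
  · norm_num
  · exact LB10

lemma LB12 : ∀ x : ℝ, 0 ≤ x → 0 ≤ (1 - x^2/2 + x^4/24 - x^6/720 + x^8/40320 - x^10/3628800 + x^12/479001600) - Real.cos x := by
  apply nonneg_of_deriv _ (fun y => Real.sin y - (y - y^3/6 + y^5/120 - y^7/5040 + y^9/362880 - y^11/39916800))
  · intro y
    have h := ((((((((hasDerivAt_const y (1:ℝ)).sub ((hasDerivAt_pow 2 y).div_const 2)).add ((hasDerivAt_pow 4 y).div_const 24)).sub ((hasDerivAt_pow 6 y).div_const 720)).add ((hasDerivAt_pow 8 y).div_const 40320)).sub ((hasDerivAt_pow 10 y).div_const 3628800)).add ((hasDerivAt_pow 12 y).div_const 479001600)).sub (Real.hasDerivAt_cos y))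
    refine h.congr_deriv ?_
    push_cast; ring
  · norm_num
  · exact LB11




lemma W_pos (t : ℝ) (h1 : 11/5 ≤ t) (h2 : t ≤ 3141593/1000000) :
    0 < 3*t^2*(1 - (3141593/1000000 - t)^2/2 + (3141593/1000000 - t)^4/24 - (3141593/1000000 - t)^6/720)
      + (6*t - 2*t^3)*((3141593/1000000 - t) - (3141593/1000000 - t)^3/6 + (3141593/1000000 - t)^5/120)
      - t*((3141593/1000000 - t) - (3141593/1000000 - t)^3/6 + (3141593/1000000 - t)^5/120)^3 := by
  obtain ⟨d, hd0, hdD, rfl⟩ : ∃ d, 0 ≤ d ∧ d ≤ 941593/1000000 ∧ t = 11/5 + d :=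
    ⟨t - 11/5, by linarith, by linarith, by ring⟩
  have p1 : 0 ≤ d := hd0
  have p2 : 0 ≤ d^2 := by positivity
  have p3 : 0 ≤ d^3 := by positivity
  have p4 : 0 ≤ d^4 := by positivity
  have p5 : 0 ≤ d^5 := by positivity
  have p9 : 0 ≤ d^9 := by positivity
  have p10 : 0 ≤ d^10 := by positivity
  have p13 : 0 ≤ d^13 := by positivity
  have p14 : 0 ≤ d^14 := by positivity
  have p16 : 0 ≤ d^16 := by positivity
  have e6 : d^6 ≤ (941593/1000000)^6 := pow_le_pow_left₀ hd0 hdD 6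
  have e7 : d^7 ≤ (941593/1000000)^7 := pow_le_pow_left₀ hd0 hdD 7
  have e8 : d^8 ≤ (941593/1000000)^8 := pow_le_pow_left₀ hd0 hdD 8
  have e11 : d^11 ≤ (941593/1000000)^11 := pow_le_pow_left₀ hd0 hdD 11
  have e12 : d^12 ≤ (941593/1000000)^12 := pow_le_pow_left₀ hd0 hdD 12
  have e15 : d^15 ≤ (941593/1000000)^15 := pow_le_pow_left₀ hd0 hdD 15
  nlinarith [p1,p2,p3,p4,p5,p9,p10,p13,p14,p16,e6,e7,e8,e11,e12,e15]



lemma Q_pos (t : ℝ) (ht0 : 0 < t) (ht : t ≤ 11/5) :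
    0 < 3*((t^3/3 - t^5/30 + t^7/840 - t^9/45360 + t^11/3991680 - t^13/479001600)
          *(2/3*t^3 - 2/15*t^5 + 4/315*t^7 - 2/2835*t^9))
      - 2*t*((t - t^3/6 + t^5/120 - t^7/5040 + t^9/362880)
          *((t^3/6 - t^5/120 + t^7/5040 - t^9/362880 + t^11/39916800)
          *(t + (t - t^3/6 + t^5/120 - t^7/5040 + t^9/362880)))) := by
  have hK : t^2 ≤ 121/25 := by nlinarith
  have c10 : (0:ℝ) < t^10 := pow_pos ht0 10
  have e10 : t^12 ≤ 121/25*t^10 := by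
    have := mul_le_mul_of_nonneg_right hK (pow_nonneg ht0.le 10); nlinarith [this]
  have e12 : t^14 ≤ 121/25*t^12 := by
    have := mul_le_mul_of_nonneg_right hK (pow_nonneg ht0.le 12); nlinarith [this]
  have e14 : t^16 ≤ 121/25*t^14 := by
    have := mul_le_mul_of_nonneg_right hK (pow_nonneg ht0.le 14); nlinarith [this]
  have e16 : t^18 ≤ 121/25*t^16 := by
    have := mul_le_mul_of_nonneg_right hK (pow_nonneg ht0.le 16); nlinarith [this]
  have e18 : t^20 ≤ 121/25*t^18 := by
    have := mul_le_mul_of_nonneg_right hK (pow_nonneg ht0.le 18); nlinarith [this]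
  have e20 : t^22 ≤ 121/25*t^20 := by
    have := mul_le_mul_of_nonneg_right hK (pow_nonneg ht0.le 20); nlinarith [this]
  have e22 : t^24 ≤ 121/25*t^22 := by
    have := mul_le_mul_of_nonneg_right hK (pow_nonneg ht0.le 22); nlinarith [this]
  have e24 : t^26 ≤ 121/25*t^24 := by
    have := mul_le_mul_of_nonneg_right hK (pow_nonneg ht0.le 24); nlinarith [this]
  have e26 : t^28 ≤ 121/25*t^26 := by
    have := mul_le_mul_of_nonneg_right hK (pow_nonneg ht0.le 26); nlinarith [this]
  have e28 : t^30 ≤ 121/25*t^28 := by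
    have := mul_le_mul_of_nonneg_right hK (pow_nonneg ht0.le 28); nlinarith [this]
  have q12 : 0 ≤ t^12 := by positivity
  have q14 : 0 ≤ t^14 := by positivity
  have q16 : 0 ≤ t^16 := by positivity
  have q18 : 0 ≤ t^18 := by positivity
  have q20 : 0 ≤ t^20 := by positivity
  have q22 : 0 ≤ t^22 := by positivity
  have q24 : 0 ≤ t^24 := by positivity
  have q26 : 0 ≤ t^26 := by positivity
  have q28 : 0 ≤ t^28 := by positivity
  have q30 : 0 ≤ t^30 := by positivity
  linarith [c10,e10,e12,e14,e16,e18,e20,e22,e24,e26,e28,q12,q14,q16,q18,q20,q22,q24,q26,q28,q30]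

lemma AL_nonneg (t : ℝ) (ht0 : 0 < t) (ht : t ≤ 11/5) :
    0 ≤ t^3/3 - t^5/30 + t^7/840 - t^9/45360 + t^11/3991680 - t^13/479001600 := by
  have hK : t^2 ≤ 121/25 := by nlinarith
  have o5 : t^5 ≤ 121/25*t^3 := by
    have := mul_le_mul_of_nonneg_right hK (pow_nonneg ht0.le 3); nlinarith [this]
  have o7 : t^7 ≤ 121/25*t^5 := by
    have := mul_le_mul_of_nonneg_right hK (pow_nonneg ht0.le 5); nlinarith [this]
  have o9 : t^9 ≤ 121/25*t^7 := by
    have := mul_le_mul_of_nonneg_right hK (pow_nonneg ht0.le 7); nlinarith [this]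
  have o11 : t^11 ≤ 121/25*t^9 := by
    have := mul_le_mul_of_nonneg_right hK (pow_nonneg ht0.le 9); nlinarith [this]
  have o13 : t^13 ≤ 121/25*t^11 := by
    have := mul_le_mul_of_nonneg_right hK (pow_nonneg ht0.le 11); nlinarith [this]
  have q3 : 0 ≤ t^3 := by positivity
  have q5 : 0 ≤ t^5 := by positivity
  have q7 : 0 ≤ t^7 := by positivity
  have q9 : 0 ≤ t^9 := by positivity
  have q11 : 0 ≤ t^11 := by positivity
  linarith

lemma BL_nonneg (t : ℝ) (ht0 : 0 < t) (ht : t ≤ 11/5) :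
    0 ≤ 2/3*t^3 - 2/15*t^5 + 4/315*t^7 - 2/2835*t^9 := by
  have hK : t^2 ≤ 121/25 := by nlinarith
  have o5 : t^5 ≤ 121/25*t^3 := by
    have := mul_le_mul_of_nonneg_right hK (pow_nonneg ht0.le 3); nlinarith [this]
  have o9 : t^9 ≤ 121/25*t^7 := by
    have := mul_le_mul_of_nonneg_right hK (pow_nonneg ht0.le 7); nlinarith [this]
  have q3 : 0 ≤ t^3 := by positivity
  have q7 : 0 ≤ t^7 := by positivity
  linarith

lemma key (t : ℝ) (ht0 : 0 < t) (htp : t < π) :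
    0 < 6*t*Real.sin t - 2*t^3*Real.sin t - t*(Real.sin t)^3
        - 3*(Real.cos t)*t^2 - 3*(Real.cos t)*(Real.sin t)^2 := by
  have hs_pos : 0 < Real.sin t := Real.sin_pos_of_pos_of_lt_pi ht0 htp
  have hst : Real.sin t ≤ t := Real.sin_le ht0.le
  have hpy : Real.sin t ^ 2 + Real.cos t ^ 2 = 1 := Real.sin_sq_add_cos_sq t
  rcases le_or_gt t (11/5) with hcase | hcase
  · -- small t : Taylor route
    have h11 := LB11 t ht0.le
    have h12 := LB12 t ht0.le
    have h9 := LB9 t ht0.le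
    have h9' := LB9 (2*t) (by linarith)
    have hs2 : Real.sin (2*t) = 2*Real.sin t*Real.cos t := Real.sin_two_mul t
    have hA : t^3/3 - t^5/30 + t^7/840 - t^9/45360 + t^11/3991680 - t^13/479001600
        ≤ Real.sin t - t*Real.cos t := by
      have hc12 : Real.cos t ≤ 1 - t^2/2 + t^4/24 - t^6/720 + t^8/40320 - t^10/3628800 + t^12/479001600 := by
        linarith
      have := mul_le_mul_of_nonneg_left hc12 ht0.le
      nlinarith [this, h11]
    have hB : 2/3*t^3 - 2/15*t^5 + 4/315*t^7 - 2/2835*t^9 ≤ t - Real.sin t*Real.cos t := by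
      nlinarith [h9', hs2]
    have hALnn := AL_nonneg t ht0 hcase
    have hBLnn := BL_nonneg t ht0 hcase
    have hSu : Real.sin t ≤ t - t^3/6 + t^5/120 - t^7/5040 + t^9/362880 := by linarith
    have hDu : t - Real.sin t ≤ t^3/6 - t^5/120 + t^7/5040 - t^9/362880 + t^11/39916800 := by linarith
    have hts : 0 ≤ t - Real.sin t := by linarith
    have hABprod : (t^3/3 - t^5/30 + t^7/840 - t^9/45360 + t^11/3991680 - t^13/479001600)
          *(2/3*t^3 - 2/15*t^5 + 4/315*t^7 - 2/2835*t^9)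
        ≤ (Real.sin t - t*Real.cos t)*(t - Real.sin t*Real.cos t) :=
      mul_le_mul hA hB hBLnn (by linarith)
    have hSuDu : Real.sin t*(t - Real.sin t)
        ≤ (t - t^3/6 + t^5/120 - t^7/5040 + t^9/362880)
          *(t^3/6 - t^5/120 + t^7/5040 - t^9/362880 + t^11/39916800) :=
      mul_le_mul hSu hDu hts (by linarith)
    have hprod2 : Real.sin t*(t - Real.sin t)*(t + Real.sin t)
        ≤ (t - t^3/6 + t^5/120 - t^7/5040 + t^9/362880)
          *((t^3/6 - t^5/120 + t^7/5040 - t^9/362880 + t^11/39916800)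
          *(t + (t - t^3/6 + t^5/120 - t^7/5040 + t^9/362880))) := by
      have h1 : 0 ≤ t + Real.sin t := by linarith
      have h2 : 0 ≤ (t - t^3/6 + t^5/120 - t^7/5040 + t^9/362880)
          *(t^3/6 - t^5/120 + t^7/5040 - t^9/362880 + t^11/39916800) :=
        le_trans (mul_nonneg hs_pos.le hts) hSuDu
      have h3 : t + Real.sin t ≤ t + (t - t^3/6 + t^5/120 - t^7/5040 + t^9/362880) := by linarith
      linarith [mul_le_mul hSuDu h3 h1 h2]
    have hRHS : 2*t*(Real.sin t*(t - Real.sin t)*(t + Real.sin t))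
        ≤ 2*t*((t - t^3/6 + t^5/120 - t^7/5040 + t^9/362880)
          *((t^3/6 - t^5/120 + t^7/5040 - t^9/362880 + t^11/39916800)
          *(t + (t - t^3/6 + t^5/120 - t^7/5040 + t^9/362880)))) :=
      mul_le_mul_of_nonneg_left hprod2 (by linarith)
    have hQ := Q_pos t ht0 hcase
    have hGid : 6*t*Real.sin t - 2*t^3*Real.sin t - t*(Real.sin t)^3
        - 3*(Real.cos t)*t^2 - 3*(Real.cos t)*(Real.sin t)^2
        = 3*((Real.sin t - t*Real.cos t)*(t - Real.sin t*Real.cos t))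
          - 2*t*(Real.sin t*(t - Real.sin t)*(t + Real.sin t)) := by
      linear_combination (-3*t*Real.sin t)*hpy
    rw [hGid]
    linarith
  · -- large t : reflection route
    have hπu : π < 3.141593 := Real.pi_lt_d6
    have hr0 : 0 < π - t := by linarith
    have hsin : Real.sin (π - t) = Real.sin t := Real.sin_pi_sub t
    have hcos : Real.cos (π - t) = -Real.cos t := Real.cos_pi_sub t
    have hsu := LB5 (π - t) hr0.le
    have hcl := LB6 (π - t) hr0.le
    have hrrt : π - t ≤ 3141593/1000000 - t := by linarith
    have hrtD : 3141593/1000000 - t ≤ 941593/1000000 := by linarith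
    have hrt0 : 0 < 3141593/1000000 - t := by linarith
    -- monotone transfer for sin bound
    have hsu2 : Real.sin t ≤ (3141593/1000000 - t) - (3141593/1000000 - t)^3/6 + (3141593/1000000 - t)^5/120 := by
      have hp5 : (π - t)^5 ≤ (3141593/1000000 - t)^5 := pow_le_pow_left₀ hr0.le hrrt 5
      have hbr : 0 ≤ ((3141593/1000000 - t) - (π - t))
          * (1 - ((π - t)^2 + (π - t)*(3141593/1000000 - t) + (3141593/1000000 - t)^2)/6) := by
        apply mul_nonneg (by linarith)
        have b1 : (π - t)^2 ≤ (941593/1000000)^2 := by nlinarith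
        have b2 : (3141593/1000000 - t)^2 ≤ (941593/1000000)^2 := by nlinarith
        have b3 : (π - t)*(3141593/1000000 - t) ≤ (941593/1000000)^2 := by nlinarith
        nlinarith
      nlinarith [hsu, hsin, hp5, hbr]
    -- monotone transfer for cos bound
    have hcl2 : 1 - (3141593/1000000 - t)^2/2 + (3141593/1000000 - t)^4/24 - (3141593/1000000 - t)^6/720
        ≤ Real.cos (π - t) := by
      have hbr2 : 0 ≤ ((3141593/1000000 - t)^2 - (π - t)^2)
          * (1/2 - ((3141593/1000000 - t)^2 + (π - t)^2)/24
             + ((3141593/1000000 - t)^4 + (3141593/1000000 - t)^2*(π - t)^2 + (π - t)^4)/720) := by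
        apply mul_nonneg (by nlinarith)
        have b1 : (π - t)^2 ≤ (941593/1000000)^2 := by nlinarith
        have b2 : (3141593/1000000 - t)^2 ≤ (941593/1000000)^2 := by nlinarith
        nlinarith [sq_nonneg ((π - t)^2), sq_nonneg ((3141593/1000000 - t)^2),
          mul_nonneg (sq_nonneg (3141593/1000000 - t)) (sq_nonneg (π - t))]
      nlinarith [hcl, hbr2]
    have hclrt0 : 0 ≤ 1 - (3141593/1000000 - t)^2/2 + (3141593/1000000 - t)^4/24 - (3141593/1000000 - t)^6/720 := by
      have b2 : (3141593/1000000 - t)^2 ≤ (941593/1000000)^2 := by nlinarith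
      have b6 : (3141593/1000000 - t)^6 ≤ (941593/1000000)^6 := pow_le_pow_left₀ hrt0.le hrtD 6
      nlinarith [sq_nonneg ((3141593/1000000 - t)^2)]
    have hcoef : 6*t - 2*t^3 ≤ 0 := by nlinarith
    have hW := W_pos t hcase.le (by linarith)
    -- assemble
    have hsun : 0 ≤ (3141593/1000000 - t) - (3141593/1000000 - t)^3/6 + (3141593/1000000 - t)^5/120 :=
      le_trans hs_pos.le hsu2
    have t2 : (6*t - 2*t^3)*((3141593/1000000 - t) - (3141593/1000000 - t)^3/6 + (3141593/1000000 - t)^5/120)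
        ≤ (6*t - 2*t^3)*Real.sin t := mul_le_mul_of_nonpos_left hsu2 hcoef
    have t3 : (Real.sin t)^3 ≤ ((3141593/1000000 - t) - (3141593/1000000 - t)^3/6 + (3141593/1000000 - t)^5/120)^3 :=
      pow_le_pow_left₀ hs_pos.le hsu2 3
    have t3' : t*(Real.sin t)^3 ≤ t*((3141593/1000000 - t) - (3141593/1000000 - t)^3/6 + (3141593/1000000 - t)^5/120)^3 :=
      mul_le_mul_of_nonneg_left t3 (by linarith)
    have t1 : 3*t^2*(1 - (3141593/1000000 - t)^2/2 + (3141593/1000000 - t)^4/24 - (3141593/1000000 - t)^6/720)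
        ≤ 3*t^2*Real.cos (π - t) := mul_le_mul_of_nonneg_left hcl2 (by positivity)
    have t4 : 0 ≤ 3*Real.cos (π - t)*(Real.sin t)^2 := by
      apply mul_nonneg (by linarith [hcl2, hclrt0]) (sq_nonneg _)
    have hcos' : Real.cos t = -Real.cos (π - t) := by linarith [hcos]
    rw [hcos']
    linarith [hW, t1, t2, t3', t4]

/-- Lemma: `D₀(u) > 0` for `u ∈ (0, π/2)`. -/
theorem D0_pos :
    ∀ u ∈ Ioo 0 (π/2),
      0 < (1/8) * cos u * sin u *
        ((-48 * u ^ 2 - 3) * cos (2 * u) + 3 * cos (6 * u)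
          + (42 * u - 64 * u ^ 3) * sin (2 * u) + 2 * u * sin (6 * u)) := by
  intro u hu
  obtain ⟨hu0, hu2⟩ := hu
  have h20 : 0 < 2*u := by linarith
  have h2pi : 2*u < π := by linarith
  have hG := key (2*u) h20 h2pi
  have hs2pos : 0 < Real.sin (2*u) := Real.sin_pos_of_pos_of_lt_pi h20 h2pi
  have e6c : Real.cos (6*u) = 4*Real.cos (2*u)^3 - 3*Real.cos (2*u) := by
    rw [show (6:ℝ)*u = 3*(2*u) by ring, Real.cos_three_mul]
  have e6s : Real.sin (6*u) = 3*Real.sin (2*u) - 4*Real.sin (2*u)^3 := by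
    rw [show (6:ℝ)*u = 3*(2*u) by ring, Real.sin_three_mul]
  have es2 : Real.sin (2*u) = 2*Real.sin u*Real.cos u := Real.sin_two_mul u
  have ec2 : Real.cos (2*u) = 2*Real.cos u^2 - 1 := Real.cos_two_mul u
  have hz : Real.sin u^2 + Real.cos u^2 = 1 := Real.sin_sq_add_cos_sq u
  rw [es2, ec2] at hG
  rw [es2] at hs2pos
  have m := mul_pos hs2pos hG
  have hz' : (6*Real.sin u*Real.cos u^3*(2*Real.cos u^2 - 1))*(Real.sin u^2 + Real.cos u^2 - 1) = 0 := by
    rw [show Real.sin u^2 + Real.cos u^2 - 1 = 0 by rw [hz]; ring, mul_zero]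
  rw [e6c, e6s, es2, ec2]
  linarith [m, hz']
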